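/- Let G be a group, ι a nonempty index type, x : ι → G a family of elements whose range has normal closure equal to all of G, and i₀ an element of ι. Suppose there exist an element λ in the commutator subgroup of G and a natural number n with λ^n * (x i₀) = 1 in G. Let N be the normal closure in G of the set { (x i) * (x j)⁻¹ : i, j ∈ ι }. Then the quotient group G ⧸ N is perfect, i.e., its commutator subgroup is the whole quotient group. -/
import Mathlib


/-- If `G` is normally generated by the family `x : ι → G`, there is a surgery-type
relation `l ^ n * x i₀ = 1` with `l` in the commutator subgroup, and `N` is the normal
closure of the "crossing change" relators `x i * (x j)⁻¹`, then `G ⧸ N` is perfect. -/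
theorem stmt_3 {G : Type*} [Group G] {ι : Type*} [Nonempty ι] (x : ι → G)
    (hgen : Subgroup.normalClosure (Set.range x) = ⊤) (i₀ : ι)
    (l : G) (hl : l ∈ commutator G) (n : ℕ) (hrel : l ^ n * x i₀ = 1) :
    commutator (G ⧸ Subgroup.normalClosure {g : G | ∃ i j, g = x i * (x j)⁻¹}) = ⊤ := by
  set N := Subgroup.normalClosure {g : G | ∃ i j, g = x i * (x j)⁻¹} with hNdef
  set f := QuotientGroup.mk' N with hfdef
  set Q := G ⧸ N
  -- the image of the commutator subgroup lies in the commutator subgroup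
  have hmap : (commutator G).map f ≤ commutator Q := by
    rw [commutator_def, commutator_def, Subgroup.map_commutator]
    exact Subgroup.commutator_mono le_top le_top
  have hfl : f l ∈ commutator Q := hmap ⟨l, hl, rfl⟩
  have hx0 : f (x i₀) ∈ commutator Q := by
    have h1 : (f l) ^ n * f (x i₀) = 1 := by
      rw [← map_pow, ← map_mul, hrel, map_one]
    have h2 : f (x i₀) = ((f l) ^ n)⁻¹ := eq_inv_of_mul_eq_one_right h1
    rw [h2]
    exact inv_mem (pow_mem hfl n)
  have hxi : ∀ i, f (x i) ∈ commutator Q := by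
    intro i
    have hmem : x i * (x i₀)⁻¹ ∈ N := Subgroup.subset_normalClosure ⟨i, i₀, rfl⟩
    have h1 : f (x i * (x i₀)⁻¹) = 1 := (QuotientGroup.eq_one_iff _).2 hmem
    have h2 : f (x i) = f (x i₀) := by
      rw [map_mul, map_inv, mul_inv_eq_one] at h1
      exact h1
    rw [h2]; exact hx0
  -- pull back
  have hle : Subgroup.normalClosure (Set.range x) ≤ (commutator Q).comap f := by
    apply Subgroup.normalClosure_le_normal
    rintro _ ⟨i, rfl⟩
    exact hxi i
  rw [hgen, top_le_iff] at hle
  rw [eq_top_iff]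
  intro q _
  obtain ⟨g, rfl⟩ := QuotientGroup.mk'_surjective N q
  have : g ∈ (commutator Q).comap f := hle ▸ Subgroup.mem_top g
  exact this
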